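/- Let f : ℝ^d → ℝ⁺ ∪ {+∞} be lower semicontinuous and x_0 a point with f(x_0) = 0. Assume there exist γ, δ > 0 such that every element x* of the Clarke subdifferential ∂^C f(x), taken over all x ∈ B(x_0, 2δ) with f(x) > 0, satisfies |x*| ≥ γ. Then for all x ∈ B(x_0, δ), the distance to the zero level set satisfies d_{{f=0}}(x) ≤ γ^{−1} f(x). -/

import Mathlib

open Set Metric Filter Topology
open Classical

noncomputable section

variable {d : ℕ}

local notation "E" => EuclideanSpace ℝ (Fin d)

lemma lsc_exists_min {G : E → EReal} (hG : LowerSemicontinuous G)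
    {s : Set E} (hs : IsCompact s) (hne : s.Nonempty) :
    ∃ z ∈ s, ∀ y ∈ s, G z ≤ G y := by
  by_contra hcon
  push_neg at hcon
  obtain ⟨b', hb's, hb'fin, hcov⟩ := hs.elim_finite_subcover_image
    (fun y (_ : y ∈ s) => hG.isOpen_preimage (G y))
    (fun z hz => by
      obtain ⟨y, hy, hlt⟩ := hcon z hz
      exact mem_iUnion₂.2 ⟨y, hy, hlt⟩)
  obtain ⟨z0, hz0⟩ := hne
  have hb'ne : b'.Nonempty := by
    rcases mem_iUnion₂.1 (hcov hz0) with ⟨y, hy, _⟩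
    exact ⟨y, hy⟩
  obtain ⟨y0, hy0, hy0min⟩ := Set.exists_min_image b' G hb'fin hb'ne
  rcases mem_iUnion₂.1 (hcov (hb's hy0)) with ⟨y, hy, hlt⟩
  exact absurd (hy0min y hy) (not_le.2 hlt)

lemma sqrt_quad_upper {σ : ℝ} (hσ : 0 < σ) (w h : E) :
    Real.sqrt (‖w + h‖ ^ 2 + σ ^ 2) ≤ Real.sqrt (‖w‖ ^ 2 + σ ^ 2)
      + ((inner ℝ w h : ℝ) + ‖h‖ ^ 2 / 2) / Real.sqrt (‖w‖ ^ 2 + σ ^ 2) := by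
  set A : ℝ := Real.sqrt (‖w‖ ^ 2 + σ ^ 2) with hAdef
  have hA : 0 < A := Real.sqrt_pos.2 (by positivity)
  have hAsq : A ^ 2 = ‖w‖ ^ 2 + σ ^ 2 := Real.sq_sqrt (by positivity)
  set u : ℝ := ((inner ℝ w h : ℝ) + ‖h‖ ^ 2 / 2) / A with hudef
  have hu : u * A = (inner ℝ w h : ℝ) + ‖h‖ ^ 2 / 2 := div_mul_cancel₀ _ hA.ne'
  have hexp : ‖w + h‖ ^ 2 = ‖w‖ ^ 2 + 2 * (inner ℝ w h : ℝ) + ‖h‖ ^ 2 := norm_add_sq_real w h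
  have hnn : (0:ℝ) ≤ ‖w + h‖ ^ 2 + σ ^ 2 := by positivity
  have hqu : 0 ≤ A + u := by nlinarith
  refine Real.sqrt_le_iff.2 ⟨hqu, ?_⟩
  nlinarith [sq_nonneg u]

/-- Proximal subdifferential of an extended-real-valued function at a point where
it is finite (Definition 4.1). -/
def proxSubdiff (f : E → EReal) (x : E) : Set E :=
  {xs | f x ≠ ⊤ ∧ f x ≠ ⊥ ∧ ∃ a > (0:ℝ), ∃ b > (0:ℝ), ∀ h : E, ‖h‖ ≤ b →
    f x + (((inner ℝ xs h : ℝ) - a * ‖h‖ ^ 2 : ℝ) : EReal) ≤ f (x + h)}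

/-- Limiting (Mordukhovich) subdifferential (Definition 4.2). -/
def limSubdiff (f : E → EReal) (x : E) : Set E :=
  {xs | ∃ (xk : ℕ → E) (xsk : ℕ → E), (∀ k, xsk k ∈ proxSubdiff f (xk k)) ∧
    Tendsto xk atTop (𝓝 x) ∧ Tendsto (fun k => f (xk k)) atTop (𝓝 (f x)) ∧
    Tendsto xsk atTop (𝓝 xs)}

/-- Clarke subdifferential: closed convex hull of the limiting subdifferential
(Definition 4.3). -/
def clarkeSubdiff (f : E → EReal) (x : E) : Set E :=
  closure (convexHull ℝ (limSubdiff f x))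

/-- Lemma 4.7: if `f ≥ 0` is lsc, `f(x₀) = 0`, and every Clarke
subgradient of `f` at points of `B(x₀, 2δ)` where `f > 0` has norm at least `γ`,
then `d_{{f=0}}(x) ≤ γ⁻¹ f(x)` on `B(x₀, δ)`. -/
theorem ioffe_metric_estimate
    (f : E → EReal) (hlsc : LowerSemicontinuous f)
    (hnonneg : ∀ x, 0 ≤ f x)
    (x0 : E) (hx0 : f x0 = 0)
    (ga dlt : ℝ) (hga : 0 < ga) (hdlt : 0 < dlt)
    (hsub : ∀ x ∈ ball x0 (2 * dlt), 0 < f x → ∀ xs ∈ clarkeSubdiff f x, ga ≤ ‖xs‖) :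
    ∀ x ∈ ball x0 dlt,
      ((infDist x {z : E | f z = 0} : ℝ) : EReal) ≤ ((ga⁻¹ : ℝ) : EReal) * f x := by
  intro x hx
  set S : Set E := {z : E | f z = 0} with hSdef
  have hx0S : x0 ∈ S := hx0
  by_cases htop : f x = ⊤
  · rw [htop, EReal.coe_mul_top_of_pos (by positivity)]
    exact le_top
  have hbot : f x ≠ ⊥ := fun hb => absurd (hnonneg x) (by simp [hb])
  set t := (f x).toReal with htdef
  have hfx : ((t : ℝ) : EReal) = f x := EReal.coe_toReal htop hbot
  have ht0 : (0:ℝ) ≤ t := by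
    rw [← EReal.coe_le_coe_iff, hfx]
    simpa using hnonneg x
  rcases eq_or_lt_of_le ht0 with ht0' | htpos
  · have hfx0 : f x = 0 := by rw [← hfx, ← ht0']; simp
    have hxS : x ∈ S := hfx0
    rw [infDist_zero_of_mem hxS, hfx0]
    simp
  rw [← hfx, ← EReal.coe_mul, EReal.coe_le_coe_iff]
  by_contra hcon
  push_neg at hcon
  set D := infDist x S with hDdef
  have hDle : D ≤ dist x x0 := infDist_le_dist_of_mem hx0S
  have hxδ : dist x x0 < dlt := mem_ball.1 hx
  have hDδ : D < dlt := lt_of_le_of_lt hDle hxδ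
  set r := (ga⁻¹ * t + D) / 2 with hrdef
  have hr1 : ga⁻¹ * t < r := by rw [hrdef]; linarith
  have hr2 : r < D := by rw [hrdef]; linarith
  have hrpos : 0 < r := lt_of_le_of_lt (by positivity) hr1
  have htr : t / r < ga := by
    rw [div_lt_iff₀ hrpos]
    have : t = ga * (ga⁻¹ * t) := by field_simp
    nlinarith
  set c := (t / r + ga) / 2 with hcdef
  have hc1 : t / r < c := by rw [hcdef]; linarith
  have hc2 : c < ga := by rw [hcdef]; linarith
  have hcpos : 0 < c := lt_of_le_of_lt (by positivity) hc1
  have htcr : t < c * r := by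
    have := (div_lt_iff₀ hrpos).1 hc1
    linarith
  set σ := (c * r - t) / (2 * c) with hσdef
  have hσpos : 0 < σ := by
    rw [hσdef]
    exact div_pos (by linarith) (by linarith)
  have hcσ : c * σ = (c * r - t) / 2 := by
    rw [hσdef]; field_simp
  have hkey : t + c * σ < c * r := by rw [hcσ]; linarith
  -- the penalty function
  set q : E → ℝ := fun w => Real.sqrt (‖w‖ ^ 2 + σ ^ 2) with hqdef
  have hq_pos : ∀ w : E, 0 < q w := fun w => Real.sqrt_pos.2 (by positivity)
  have hq_sq : ∀ w : E, q w ^ 2 = ‖w‖ ^ 2 + σ ^ 2 := fun w => Real.sq_sqrt (by positivity)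
  have hq_norm_lt : ∀ w : E, ‖w‖ < q w := by
    intro w
    nlinarith [hq_sq w, hq_pos w, norm_nonneg w]
  have hq_zero : q 0 = σ := by
    rw [hqdef]
    simp [Real.sqrt_sq hσpos.le]
  have hq_upper : ∀ w h : E, q (w + h) ≤ q w + ((inner ℝ w h : ℝ) + ‖h‖ ^ 2 / 2) / q w :=
    fun w h => sqrt_quad_upper hσpos w h
  -- minimize the penalized function on the closed ball
  set G : E → EReal := fun z => f z + ((c * q (z - x) : ℝ) : EReal) with hGdef
  have hqcont : Continuous q := by
    rw [hqdef]
    exact Real.continuous_sqrt.comp ((continuous_norm.pow 2).add continuous_const)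
  have hGlsc : LowerSemicontinuous G := by
    apply LowerSemicontinuous.add' hlsc
    · apply Continuous.lowerSemicontinuous
      apply continuous_coe_real_ereal.comp
      exact continuous_const.mul (hqcont.comp (continuous_id.sub continuous_const))
    · intro z
      exact EReal.continuousAt_add (Or.inr (EReal.coe_ne_bot _)) (Or.inr (EReal.coe_ne_top _))
  obtain ⟨z, hzmem, hzmin⟩ := lsc_exists_min hGlsc (isCompact_closedBall x r)
    ⟨x, mem_closedBall_self hrpos.le⟩
  set w := z - x with hwdef
  have hminx := hzmin x (mem_closedBall_self hrpos.le)
  have hGx : G x = ((t + c * σ : ℝ) : EReal) := by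
    simp only [hGdef, sub_self, hq_zero, ← hfx, ← EReal.coe_add]
  have hfz_bot : f z ≠ ⊥ := fun hb => absurd (hnonneg z) (by simp [hb])
  have hfz_top : f z ≠ ⊤ := by
    intro htop'
    have hGztop : G z = ⊤ := by simp only [hGdef, htop', EReal.top_add_coe]
    rw [hGztop, hGx] at hminx
    exact EReal.coe_ne_top _ (top_le_iff.1 hminx)
  set m := (f z).toReal with hmdef
  have hfz : ((m : ℝ) : EReal) = f z := EReal.coe_toReal hfz_top hfz_bot
  have hm0 : (0:ℝ) ≤ m := by
    rw [← EReal.coe_le_coe_iff, hfz]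
    simpa using hnonneg z
  have hGz : G z = ((m + c * q w : ℝ) : EReal) := by
    simp only [hGdef, ← hfz, ← hwdef, ← EReal.coe_add]
  have hmain : m + c * q w ≤ t + c * σ := by
    rw [hGz, hGx] at hminx
    exact EReal.coe_le_coe_iff.1 hminx
  have hqw_lt : q w < r := by
    have h1 : c * q w < c * r := by linarith
    exact lt_of_mul_lt_mul_left h1 hcpos.le
  have hw_lt : ‖w‖ < r := (hq_norm_lt w).trans hqw_lt
  have hz2δ : z ∈ ball x0 (2 * dlt) := by
    rw [mem_ball]
    have h1 : dist z x0 ≤ dist z x + dist x x0 := dist_triangle _ _ _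
    have h2 : dist z x = ‖w‖ := by rw [dist_eq_norm, hwdef]
    linarith
  have hfz_pos : 0 < f z := by
    rcases (hnonneg z).lt_or_eq with h | h
    · exact h
    · exfalso
      have hzS : z ∈ S := h.symm
      have hDz : D ≤ dist x z := infDist_le_dist_of_mem hzS
      have : dist x z = ‖w‖ := by rw [dist_eq_norm, hwdef, norm_sub_rev]
      linarith
  -- the proximal subgradient
  set xs : E := (-(c / q w)) • w with hxsdef
  have hxs_norm : ‖xs‖ < ga := by
    have hpos : 0 < c / q w := div_pos hcpos (hq_pos w)
    have h1 : ‖xs‖ = (c / q w) * ‖w‖ := by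
      rw [hxsdef, norm_smul, Real.norm_eq_abs, abs_neg, abs_of_pos hpos]
    have h2 : (c / q w) * ‖w‖ < (c / q w) * q w :=
      mul_lt_mul_of_pos_left (hq_norm_lt w) hpos
    have h3 : (c / q w) * q w = c := div_mul_cancel₀ _ (hq_pos w).ne'
    rw [h1]
    linarith
  have hprox : xs ∈ proxSubdiff f z := by
    refine ⟨hfz_top, hfz_bot, c / (2 * q w), div_pos hcpos (by linarith [hq_pos w]),
      r - ‖w‖, by linarith, ?_⟩
    intro h hh
    have hwh : z + h - x = w + h := by rw [hwdef]; abel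
    have hz_h : z + h ∈ closedBall x r := by
      rw [mem_closedBall, dist_eq_norm, hwh]
      calc ‖w + h‖ ≤ ‖w‖ + ‖h‖ := norm_add_le _ _
        _ ≤ r := by linarith
    have hmin := hzmin (z + h) hz_h
    by_cases htop2 : f (z + h) = ⊤
    · rw [htop2]
      exact le_top
    have hbot2 : f (z + h) ≠ ⊥ := fun hb => absurd (hnonneg (z + h)) (by simp [hb])
    set p := (f (z + h)).toReal with hpdef
    have hfzh : ((p : ℝ) : EReal) = f (z + h) := EReal.coe_toReal htop2 hbot2
    rw [hGz] at hmin
    simp only [hGdef, hwh, ← hfzh, ← EReal.coe_add] at hmin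
    have hmin' : m + c * q w ≤ p + c * q (w + h) := EReal.coe_le_coe_iff.1 hmin
    rw [← hfz, ← hfzh, ← EReal.coe_add, EReal.coe_le_coe_iff]
    have hup := mul_le_mul_of_nonneg_left (hq_upper w h) hcpos.le
    have he1 : c * (((inner ℝ w h : ℝ) + ‖h‖ ^ 2 / 2) / q w)
        = (c / q w) * (inner ℝ w h : ℝ) + (c / (2 * q w)) * ‖h‖ ^ 2 := by
      field_simp
    have hinner : (inner ℝ xs h : ℝ) = -(c / q w) * (inner ℝ w h : ℝ) := by
      rw [hxsdef]; exact real_inner_smul_left _ _ _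
    have hup' : c * q (w + h) ≤ c * q w
        + ((c / q w) * (inner ℝ w h : ℝ) + (c / (2 * q w)) * ‖h‖ ^ 2) := by
      rw [mul_add, he1] at hup
      exact hup
    rw [hinner]
    linarith [hmin', hup']
  have hlim : xs ∈ limSubdiff f z :=
    ⟨fun _ => z, fun _ => xs, fun _ => hprox, tendsto_const_nhds, tendsto_const_nhds,
      tendsto_const_nhds⟩
  have hclarke : xs ∈ clarkeSubdiff f z := subset_closure (subset_convexHull ℝ _ hlim)
  exact absurd (hsub z hz2δ hfz_pos xs hclarke) (not_le.2 hxs_norm)
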